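/- Let A be a C*-algebra, let a, h ∈ A be positive elements with ‖a‖ ≤ 1 and ‖h‖ ≤ 1, and let q ∈ A be a projection. Then ‖q·a − q‖ ≤ 12·‖q·h·a·h − q‖^(1/3). -/

import Mathlib

section Key

variable {B : Type*} [CStarAlgebra B] [PartialOrder B] [StarOrderedRing B]

lemma key_stmt2 (a h q : B) (ha : 0 ≤ a) (hh : 0 ≤ h) (hna : ‖a‖ ≤ 1) (hnh : ‖h‖ ≤ 1)
    (hq_sa : IsSelfAdjoint q) (hq_idem : q * q = q) :
    ‖q * a - q‖ ≤ 3 * Real.sqrt ‖q * h * a * h - q‖ := by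
  set ε := ‖q * h * a * h - q‖ with hε_def
  have hε0 : 0 ≤ ε := norm_nonneg _
  have hh_sa : IsSelfAdjoint h := .of_nonneg hh
  have hq_norm : ‖q‖ ≤ 1 := by
    have h1 : ‖q‖ * ‖q‖ = ‖q‖ := by
      conv_lhs => rw [← CStarRing.norm_star_mul_self, hq_sa.star_eq, hq_idem]
    nlinarith [norm_nonneg q]
  have hq_pos : 0 ≤ q := by
    have := star_mul_self_nonneg q
    rwa [hq_sa.star_eq, hq_idem] at this
  have ha1 : a ≤ 1 := (CStarAlgebra.norm_le_one_iff_of_nonneg a ha).mp hna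
  have hh1 : h ≤ 1 := (CStarAlgebra.norm_le_one_iff_of_nonneg h hh).mp hnh
  have h1a : (0 : B) ≤ 1 - a := sub_nonneg.mpr ha1
  have h1h : (0 : B) ≤ 1 - h := sub_nonneg.mpr hh1
  have h1h_sa : IsSelfAdjoint ((1 : B) - h) := .of_nonneg h1h
  set c := CFC.sqrt (1 - a) with hc_def
  have hc : 0 ≤ c := CFC.sqrt_nonneg _
  have hc_sa : IsSelfAdjoint c := .of_nonneg hc
  have hcc : c * c = 1 - a := CFC.sqrt_mul_sqrt_self _ h1a
  have hcn : ‖c‖ ≤ 1 := by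
    have h2 : ‖c‖ * ‖c‖ = ‖(1 : B) - a‖ := by
      conv_lhs => rw [← CStarRing.norm_star_mul_self, hc_sa.star_eq, hcc]
    have h3 : ‖(1 : B) - a‖ ≤ 1 :=
      (CStarAlgebra.norm_le_one_iff_of_nonneg _ h1a).mpr (by simpa using sub_le_self (1 : B) ha)
    nlinarith [norm_nonneg c]
  have conj_nonneg : ∀ x : B, 0 ≤ x → 0 ≤ q * x * q := fun x hx => by
    simpa [hq_sa.star_eq] using star_left_conjugate_nonneg hx q
  have conj_mono : ∀ x y : B, x ≤ y → q * x * q ≤ q * y * q := fun x y hxy => by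
    simpa [hq_sa.star_eq] using star_left_conjugate_le_conjugate hxy q
  -- E1
  have E1 : ‖q * (1 - h * a * h) * q‖ ≤ ε := by
    have heq : q * (1 - h * a * h) * q = (q - q * h * a * h) * q := by noncomm_ring
    calc ‖q * (1 - h * a * h) * q‖ = ‖(q - q * h * a * h) * q‖ := by rw [heq]
      _ ≤ ‖q - q * h * a * h‖ * ‖q‖ := norm_mul_le _ _
      _ ≤ ε * 1 := mul_le_mul (le_of_eq (norm_sub_rev _ _)) hq_norm (norm_nonneg _) hε0
      _ = ε := mul_one ε
  -- order facts
  have hhh : h * a * h ≤ h * h := by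
    have := star_left_conjugate_le_conjugate ha1 h
    simpa [hh_sa.star_eq] using this
  have hh2 : h * h ≤ h := by
    have := CStarAlgebra.pow_antitone hh hh1 (by norm_num : (1 : ℕ) ≤ 2)
    simpa [pow_one, pow_two] using this
  have ord2 : (1 : B) - h * h ≤ 1 - h * a * h := sub_le_sub_left hhh 1
  have ord1 : (1 : B) - h ≤ 1 - h * a * h := (sub_le_sub_left hh2 1).trans ord2
  have h1hh : (0 : B) ≤ 1 - h * h := sub_nonneg.mpr (hh2.trans hh1)
  have E4 : ‖q * (1 - h) * q‖ ≤ ε :=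
    (CStarAlgebra.norm_le_norm_of_nonneg_of_le (conj_nonneg _ h1h) (conj_mono _ _ ord1)).trans E1
  have E5 : ‖q * (1 - h * h) * q‖ ≤ ε :=
    (CStarAlgebra.norm_le_norm_of_nonneg_of_le (conj_nonneg _ h1hh) (conj_mono _ _ ord2)).trans E1
  have E6 : ‖q * (h * (1 - a) * h) * q‖ ≤ 2 * ε := by
    have key : q * (h * (1 - a) * h) * q = q * (1 - h * a * h) * q - q * (1 - h * h) * q := by
      noncomm_ring
    rw [key]
    calc ‖q * (1 - h * a * h) * q - q * (1 - h * h) * q‖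
        ≤ ‖q * (1 - h * a * h) * q‖ + ‖q * (1 - h * h) * q‖ := norm_sub_le _ _
      _ ≤ 2 * ε := by linarith
  -- E7
  have E7 : ‖c * (h * q)‖ ≤ Real.sqrt (2 * ε) := by
    rw [Real.le_sqrt (norm_nonneg _) (by positivity)]
    have heq : star (c * (h * q)) * (c * (h * q)) = q * (h * (1 - a) * h) * q := by
      rw [star_mul, star_mul, hc_sa.star_eq, hh_sa.star_eq, hq_sa.star_eq, ← hcc]
      noncomm_ring
    calc ‖c * (h * q)‖ ^ 2 = ‖star (c * (h * q)) * (c * (h * q))‖ := by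
          rw [CStarRing.norm_star_mul_self, pow_two]
      _ = ‖q * (h * (1 - a) * h) * q‖ := by rw [heq]
      _ ≤ 2 * ε := E6
  -- E8
  have E8 : ‖c * ((1 - h) * q)‖ ≤ Real.sqrt ε := by
    rw [Real.le_sqrt (norm_nonneg _) hε0]
    have step1 : (1 - h) * (1 - a) * (1 - h) ≤ (1 - h) * (1 - h) := by
      have := star_left_conjugate_le_conjugate (show (1 : B) - a ≤ 1 by simpa using sub_le_self (1 : B) ha)
        (1 - h)
      simpa [h1h_sa.star_eq] using this
    have step2 : (1 - h) * (1 - h) ≤ 1 - h := by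
      have := CStarAlgebra.pow_antitone h1h (by simpa using sub_le_self (1 : B) hh)
        (by norm_num : (1 : ℕ) ≤ 2)
      simpa [pow_one, pow_two] using this
    have pos : (0 : B) ≤ (1 - h) * (1 - a) * (1 - h) := by
      simpa [h1h_sa.star_eq] using star_left_conjugate_nonneg h1a (1 - h)
    have heq : star (c * ((1 - h) * q)) * (c * ((1 - h) * q))
        = q * ((1 - h) * (1 - a) * (1 - h)) * q := by
      rw [star_mul, star_mul, hc_sa.star_eq, h1h_sa.star_eq, hq_sa.star_eq, ← hcc]
      noncomm_ring
    calc ‖c * ((1 - h) * q)‖ ^ 2 = ‖star (c * ((1 - h) * q)) * (c * ((1 - h) * q))‖ := by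
          rw [CStarRing.norm_star_mul_self, pow_two]
      _ = ‖q * ((1 - h) * (1 - a) * (1 - h)) * q‖ := by rw [heq]
      _ ≤ ‖q * (1 - h) * q‖ :=
          CStarAlgebra.norm_le_norm_of_nonneg_of_le (conj_nonneg _ pos)
            (conj_mono _ _ (step1.trans step2))
      _ ≤ ε := E4
  -- E9
  have hsplit : c * q = c * ((1 - h) * q) + c * (h * q) := by noncomm_ring
  have E9 : ‖c * q‖ ≤ Real.sqrt ε + Real.sqrt (2 * ε) := by
    rw [hsplit]
    exact (norm_add_le _ _).trans (add_le_add E8 E7)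
  -- E10
  have E10 : ‖q * a - q‖ ≤ ‖c * q‖ := by
    have h1 : q * a - q = -(q * (c * c)) := by rw [hcc]; noncomm_ring
    rw [h1, norm_neg]
    calc ‖q * (c * c)‖ = ‖q * c * c‖ := by rw [mul_assoc]
      _ ≤ ‖q * c‖ * ‖c‖ := norm_mul_le _ _
      _ ≤ ‖q * c‖ * 1 := mul_le_mul_of_nonneg_left hcn (norm_nonneg _)
      _ = ‖q * c‖ := mul_one _
      _ = ‖c * q‖ := by rw [← norm_star, star_mul, hc_sa.star_eq, hq_sa.star_eq]
  have hsqrt2 : Real.sqrt (2 * ε) ≤ 2 * Real.sqrt ε := by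
    rw [Real.sqrt_mul (by norm_num : (0:ℝ) ≤ 2)]
    have h2 : Real.sqrt 2 ≤ 2 := by
      nlinarith [Real.sq_sqrt (show (0:ℝ) ≤ 2 by norm_num), Real.sqrt_nonneg 2]
    nlinarith [Real.sqrt_nonneg ε]
  calc ‖q * a - q‖ ≤ Real.sqrt ε + Real.sqrt (2 * ε) := E10.trans E9
    _ ≤ 3 * Real.sqrt ε := by nlinarith [Real.sqrt_nonneg ε]

end Key

/-- Let `A` be a C*-algebra, `a, h ∈ A` positive with `‖a‖ ≤ 1`, `‖h‖ ≤ 1`,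
and let `q ∈ A` be a projection.  Then `‖q·a − q‖ ≤ 12·‖q·h·a·h − q‖^(1/3)`. -/
theorem stmt_2 {A : Type*} [NonUnitalNormedRing A] [StarRing A] [CStarRing A]
    [CompleteSpace A] [NormedSpace ℂ A] [IsScalarTower ℂ A A] [SMulCommClass ℂ A A]
    [StarModule ℂ A]
    (a h q : A) (ha : ∃ x : A, a = star x * x) (hh : ∃ x : A, h = star x * x)
    (hna : ‖a‖ ≤ 1) (hnh : ‖h‖ ≤ 1)
    (hq_sa : IsSelfAdjoint q) (hq_idem : q * q = q) :
    ‖q * a - q‖ ≤ 12 * ‖q * h * a * h - q‖ ^ ((1 : ℝ) / 3) := by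
  letI : NonUnitalCStarAlgebra A :=
    { ‹NonUnitalNormedRing A›, ‹StarRing A›, ‹CStarRing A›, ‹CompleteSpace A›,
      ‹NormedSpace ℂ A›, ‹IsScalarTower ℂ A A›, ‹SMulCommClass ℂ A A›, ‹StarModule ℂ A› with }
  letI : PartialOrder (Unitization ℂ A) := CStarAlgebra.spectralOrder _
  letI : StarOrderedRing (Unitization ℂ A) := CStarAlgebra.spectralOrderedRing _
  obtain ⟨x, hx⟩ := ha
  obtain ⟨y, hy⟩ := hh
  have ha' : (0 : Unitization ℂ A) ≤ (a : Unitization ℂ A) := by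
    rw [hx, Unitization.inr_mul, Unitization.inr_star]
    exact star_mul_self_nonneg _
  have hh' : (0 : Unitization ℂ A) ≤ (h : Unitization ℂ A) := by
    rw [hy, Unitization.inr_mul, Unitization.inr_star]
    exact star_mul_self_nonneg _
  have hq_sa' : IsSelfAdjoint ((q : Unitization ℂ A)) := by
    rw [IsSelfAdjoint, ← Unitization.inr_star, hq_sa.star_eq]
  have hq_idem' : (q : Unitization ℂ A) * q = q := by
    rw [← Unitization.inr_mul, hq_idem]
  have key := key_stmt2 (B := Unitization ℂ A) a h q ha' hh'
    (by rw [Unitization.norm_inr]; exact hna) (by rw [Unitization.norm_inr]; exact hnh)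
    hq_sa' hq_idem'
  have hcast1 : ((q * a - q : A) : Unitization ℂ A) = (q : Unitization ℂ A) * a - q := by
    rw [Unitization.inr_sub, Unitization.inr_mul]
  have hcast2 : ((q * h * a * h - q : A) : Unitization ℂ A)
      = (q : Unitization ℂ A) * h * a * h - q := by
    rw [Unitization.inr_sub, Unitization.inr_mul, Unitization.inr_mul, Unitization.inr_mul]
  have key' : ‖q * a - q‖ ≤ 3 * Real.sqrt ‖q * h * a * h - q‖ := by
    rw [← Unitization.norm_inr (𝕜 := ℂ) (q * a - q), hcast1,
      ← Unitization.norm_inr (𝕜 := ℂ) (q * h * a * h - q), hcast2]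
    exact key
  set ε := ‖q * h * a * h - q‖ with hε_def
  have hε0 : 0 ≤ ε := norm_nonneg _
  by_cases hε1 : ε ≤ 1
  · rcases eq_or_lt_of_le hε0 with hε | hε
    · have : ε = 0 := hε.symm
      rw [this] at key' ⊢
      simpa [Real.zero_rpow (by norm_num : (1:ℝ)/3 ≠ 0)] using key'
    · have hsq : Real.sqrt ε ≤ ε ^ ((1 : ℝ) / 3) := by
        rw [Real.sqrt_eq_rpow]
        exact Real.rpow_le_rpow_of_exponent_ge hε hε1 (by norm_num)
      have hpow : (0 : ℝ) ≤ ε ^ ((1 : ℝ) / 3) := Real.rpow_nonneg hε0 _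
      calc ‖q * a - q‖ ≤ 3 * Real.sqrt ε := key'
        _ ≤ 3 * ε ^ ((1 : ℝ) / 3) := by linarith
        _ ≤ 12 * ε ^ ((1 : ℝ) / 3) := by linarith
  · push_neg at hε1
    have hq_norm : ‖q‖ ≤ 1 := by
      have h1 : ‖q‖ * ‖q‖ = ‖q‖ := by
        conv_lhs => rw [← CStarRing.norm_star_mul_self, hq_sa.star_eq, hq_idem]
      nlinarith [norm_nonneg q]
    have hle2 : ‖q * a - q‖ ≤ 2 := by
      calc ‖q * a - q‖ ≤ ‖q * a‖ + ‖q‖ := norm_sub_le _ _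
        _ ≤ ‖q‖ * ‖a‖ + ‖q‖ := by linarith [norm_mul_le q a]
        _ ≤ 2 := by nlinarith [norm_nonneg q, norm_nonneg a]
    have hrp : (1 : ℝ) ≤ ε ^ ((1 : ℝ) / 3) := by
      calc (1 : ℝ) = (1 : ℝ) ^ ((1 : ℝ) / 3) := (Real.one_rpow _).symm
        _ ≤ ε ^ ((1 : ℝ) / 3) := Real.rpow_le_rpow zero_le_one hε1.le (by norm_num)
    linarith
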